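/- Let e : (0,∞) → ℝ be a Synge-type EOS and d ≥ 1. Let (ρ, v, θ) be a primitive state (ρ > 0, θ > 0, |v| < 1) with conservative vector U = U(ρ,v,θ) and fluxes F_i = F_i(ρ,v,θ). Then for every β ≥ 1, every i ∈ {1,…,d}, every sign s ∈ {+1,−1}, and every v_* ∈ ℝ^d with |v_*| < 1, one has (βU + s·F_i)·ñ_*(v_*) > 0. -/
import Mathlib


open scoped BigOperators

set_option maxHeartbeats 1000000

noncomputable section

/-- Euclidean dot product on `Fin d → ℝ`. -/
def dotp {d : ℕ} (v w : Fin d → ℝ) : ℝ := ∑ i, v i * w i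

/-- Squared Euclidean norm on `Fin d → ℝ`. -/
def nsq {d : ℕ} (v : Fin d → ℝ) : ℝ := ∑ i, (v i) ^ 2

/-- Euclidean norm on `Fin d → ℝ`. -/
def nrm {d : ℕ} (v : Fin d → ℝ) : ℝ := Real.sqrt (nsq v)

/-- `Z(θ) = ∫₁^θ e'(ξ)/ξ dξ`. -/
def Zfun (e : ℝ → ℝ) (θ : ℝ) : ℝ := ∫ ξ in (1:ℝ)..θ, deriv e ξ / ξ

/-- Specific enthalpy `h(θ) = 1 + θ + e(θ)`. -/
def hfun (e : ℝ → ℝ) (θ : ℝ) : ℝ := 1 + θ + e θ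

/-- Lorentz factor `γ = (1 − |v|²)^{−1/2}`. -/
def gam {d : ℕ} (v : Fin d → ℝ) : ℝ := 1 / Real.sqrt (1 - nsq v)

/-- Conservative vector `U(ρ,v,θ) = (ργ, ρh(θ)γ²v, ρh(θ)γ² − p)` with `p = ρθ`,
viewed as an element of `ℝ × ℝ^d × ℝ ≃ ℝ^{d+2}`. -/
def Uvec (e : ℝ → ℝ) {d : ℕ} (ρ : ℝ) (v : Fin d → ℝ) (θ : ℝ) : ℝ × (Fin d → ℝ) × ℝ :=
  (ρ * gam v,
   fun j => ρ * hfun e θ * (gam v) ^ 2 * v j,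
   ρ * hfun e θ * (gam v) ^ 2 - ρ * θ)

/-- Flux `F_i(ρ,v,θ) = (ργv_i, ρh(θ)γ²v_i v + p e_i, ρh(θ)γ²v_i)` with `p = ρθ`. -/
def Fvec (e : ℝ → ℝ) {d : ℕ} (i : Fin d) (ρ : ℝ) (v : Fin d → ℝ) (θ : ℝ) :
    ℝ × (Fin d → ℝ) × ℝ :=
  (ρ * gam v * v i,
   fun j => ρ * hfun e θ * (gam v) ^ 2 * v i * v j + ρ * θ * (if j = i then 1 else 0),
   ρ * hfun e θ * (gam v) ^ 2 * v i)

/-- Euclidean inner product on `ℝ^{d+2} = ℝ × ℝ^d × ℝ`. -/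
def dot3 {d : ℕ} (u w : ℝ × (Fin d → ℝ) × ℝ) : ℝ :=
  u.1 * w.1 + dotp u.2.1 w.2.1 + u.2.2 * w.2.2

/-- `ñ_*(v_*) = (−√(1−|v_*|²), −v_*, 1)`. -/
def ntil {d : ℕ} (vs : Fin d → ℝ) : ℝ × (Fin d → ℝ) × ℝ :=
  (-Real.sqrt (1 - nsq vs), fun j => -vs j, 1)

/-- `n_*(v_*,θ_*) = (−h(θ_*)√(1−|v_*|²), −v_*, 1)`. -/
def nstar (e : ℝ → ℝ) {d : ℕ} (vs : Fin d → ℝ) (θs : ℝ) : ℝ × (Fin d → ℝ) × ℝ :=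
  (-(hfun e θs) * Real.sqrt (1 - nsq vs), fun j => -vs j, 1)

/-- `p_*(θ_*) = θ_* exp(Z(θ_*) − σ)`. -/
def pstar (e : ℝ → ℝ) (σ θs : ℝ) : ℝ := θs * Real.exp (Zfun e θs - σ)

/-- The admissible set `Ω_σ ⊆ ℝ^{d+2}`. -/
def OmegaSet (e : ℝ → ℝ) (d : ℕ) (σ : ℝ) : Set (ℝ × (Fin d → ℝ) × ℝ) :=
  { u | ∃ ρ θ : ℝ, ∃ v : Fin d → ℝ,
      0 < ρ ∧ 0 < θ ∧ nrm v < 1 ∧ σ ≤ -Real.log ρ + Zfun e θ ∧ u = Uvec e ρ v θ }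

lemma aux_sqlt (x : ℝ) (hx0 : 0 ≤ x) (h : Real.sqrt x < 1) : x < 1 := by
  nlinarith [Real.sq_sqrt hx0, Real.sqrt_nonneg x]

lemma aux_hkey (θ E : ℝ) (hg : 1 + θ ^ 2 < (E + 1) ^ 2) :
    0 < (1 + θ + E) ^ 2 - 2 * (1 + θ + E) * θ - 1 := by nlinarith

lemma aux_h2θ (θ E : ℝ) (hg : 1 + θ ^ 2 < (E + 1) ^ 2) (hθ : 0 < θ) (hE : 0 < E) :
    2 * θ < 1 + θ + E := by nlinarith

lemma aux_bsq (β : ℝ) (hβ : 1 ≤ β) : (0:ℝ) ≤ β ^ 2 - 1 := by nlinarith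

lemma aux_Kpos (β t n : ℝ) (ht : t ^ 2 ≤ n) (hn : n < 1) (hβ : 1 ≤ β) : 0 < β + t := by
  nlinarith [sq_nonneg (t + 1)]

lemma aux_e2 (β t n : ℝ) (ht : t ^ 2 ≤ n) (hn0 : 0 ≤ n) (hβ : 1 ≤ β) :
    (0:ℝ) ≤ 2 * (β + t) - β * (1 - n) := by
  nlinarith [sq_nonneg (t + 1)]

lemma aux_e4 (β γ n K : ℝ) (hγsq : γ ^ 2 * (1 - n) = 1) (hγpos : 0 < γ)
    (e2 : (0:ℝ) ≤ 2 * K - β * (1 - n)) : β ≤ 2 * (γ ^ 2 * K) := by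
  have h1 : 0 ≤ γ ^ 2 * (2 * K - β * (1 - n)) := mul_nonneg (pow_pos hγpos 2).le e2
  have h2 : β * (γ ^ 2 * (1 - n)) = β := by rw [hγsq, mul_one]
  nlinarith [h1, h2]

lemma aux_e5 (β θ h γ K : ℝ) (hθ : 0 < θ) (e4 : β ≤ 2 * (γ ^ 2 * K))
    (e3 : 2 * θ * (γ ^ 2 * K) < h * (γ ^ 2 * K)) : β * θ < h * (γ ^ 2 * K) := by
  nlinarith

lemma aux_c3final (ρ x y : ℝ) (hρ : 0 < ρ) (hxy : y < x) : 0 < ρ * x - ρ * y := by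
  nlinarith

lemma aux_CS (c₁ g P Q m : ℝ) (hQ0 : 0 ≤ Q) (hg : g ^ 2 = 1 - m) (hm0 : 0 ≤ m)
    (hP : P ^ 2 ≤ Q * m) : (c₁ * g + P) ^ 2 ≤ c₁ ^ 2 + Q := by
  rcases eq_or_lt_of_le hm0 with hm' | hm'
  · have hP0 : P = 0 := by nlinarith [sq_nonneg P]
    rw [hP0, add_zero, mul_pow]
    nlinarith [sq_nonneg c₁]
  · have hgP : P ^ 2 * g ^ 2 = P ^ 2 * (1 - m) := by rw [hg]
    have hgC : c₁ ^ 2 * m * g ^ 2 = c₁ ^ 2 * m * (1 - m) := by rw [hg]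
    have hN : 0 ≤ m * (c₁ ^ 2 + Q - (c₁ * g + P) ^ 2) := by
      nlinarith [sq_nonneg (c₁ * m - g * P), hP, hgP, hgC]
    have := (mul_nonneg_iff_of_pos_left hm').mp hN
    linarith

lemma aux_final (X B c : ℝ) (h1 : X ^ 2 ≤ B) (h2 : B < c ^ 2) (h3 : 0 < c) : X < c := by
  nlinarith

lemma synge_growth (e : ℝ → ℝ)
    (hdiff : ∀ ξ : ℝ, 0 < ξ → DifferentiableAt ℝ e ξ)
    (hpos : ∀ ξ : ℝ, 0 < ξ → 0 < e ξ)
    (hineq : ∀ ξ : ℝ, 0 < ξ → ξ / (e ξ + 1) < deriv e ξ) :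
    ∀ θ : ℝ, 0 < θ → 1 + θ ^ 2 < (e θ + 1) ^ 2 := by
  have hmono : StrictMonoOn (fun ξ => (e ξ + 1) ^ 2 - ξ ^ 2) (Set.Ioi 0) := by
    apply strictMonoOn_of_deriv_pos (convex_Ioi 0)
    · intro x hx
      have : DifferentiableAt ℝ (fun ξ => (e ξ + 1) ^ 2 - ξ ^ 2) x :=
        (((hdiff x hx).add_const 1).pow 2).sub ((differentiableAt_id.pow 2))
      exact this.continuousAt.continuousWithinAt
    · intro x hx
      rw [interior_Ioi] at hx
      have hx0 : (0:ℝ) < x := hx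
      have h1 : HasDerivAt e (deriv e x) x := (hdiff x hx0).hasDerivAt
      have h2 : HasDerivAt (fun ξ => e ξ + 1) (deriv e x) x := h1.add_const 1
      have h3 := h2.pow 2
      have h4 : HasDerivAt (fun ξ : ℝ => ξ ^ 2) (2 * x) x := by
        simpa using hasDerivAt_pow 2 x
      have h5 : HasDerivAt (fun ξ => (e ξ + 1) ^ 2 - ξ ^ 2)
          (2 * (e x + 1) ^ 1 * deriv e x - 2 * x) x := h3.sub h4
      rw [h5.deriv]
      have he := hpos x hx0
      have hi := hineq x hx0
      rw [div_lt_iff₀ (by linarith)] at hi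
      nlinarith
  have hge1 : ∀ σ : ℝ, 0 < σ → (1:ℝ) ≤ (e σ + 1) ^ 2 - σ ^ 2 := by
    intro σ hσ
    by_contra hlt
    push_neg at hlt
    set δ := 1 - ((e σ + 1) ^ 2 - σ ^ 2) with hδdef
    have hδpos : 0 < δ := by simp only [hδdef]; linarith
    set ξ := min (σ / 2) (Real.sqrt δ / 2) with hξdef
    have hξpos : 0 < ξ := lt_min (by linarith) (by positivity)
    have hξσ : ξ < σ := lt_of_le_of_lt (min_le_left _ _) (by linarith)
    have h1 := hmono (Set.mem_Ioi.2 hξpos) (Set.mem_Ioi.2 hσ) hξσ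
    have h2 : ξ ^ 2 ≤ δ / 4 := by
      have hle : ξ ≤ Real.sqrt δ / 2 := min_le_right _ _
      have := Real.sq_sqrt hδpos.le
      nlinarith [hξpos.le]
    have h3 : 0 < e ξ := hpos ξ hξpos
    simp only at h1
    nlinarith
  intro θ hθ
  have h1 := hmono (Set.mem_Ioi.2 (by linarith : (0:ℝ) < θ / 2)) (Set.mem_Ioi.2 hθ)
      (by linarith : θ / 2 < θ)
  have h2 := hge1 (θ / 2) (by linarith)
  simp only at h1
  linarith

/-- Let `e` be a Synge-type EOS, `d ≥ 1`, and `(ρ,v,θ)` a primitive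
state with `U = U(ρ,v,θ)`, `F_i = F_i(ρ,v,θ)`. Then for every `β ≥ 1`, every
`i ∈ {1,…,d}`, every sign `s ∈ {+1,−1}`, and every `v_*` in the open unit ball,
`(βU + s·F_i)·ñ_*(v_*) > 0`. -/
theorem minimum_entropy_stmt10 (e : ℝ → ℝ)
    (hdiff : ∀ ξ : ℝ, 0 < ξ → DifferentiableAt ℝ e ξ)
    (hpos : ∀ ξ : ℝ, 0 < ξ → 0 < e ξ)
    (hineq : ∀ ξ : ℝ, 0 < ξ → ξ / (e ξ + 1) < deriv e ξ)
    (d : ℕ) (hd : 1 ≤ d)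
    (ρ : ℝ) (v : Fin d → ℝ) (θ : ℝ)
    (hρ : 0 < ρ) (hθ : 0 < θ) (hv : nrm v < 1)
    (β : ℝ) (hβ : 1 ≤ β) (i : Fin d)
    (s : ℝ) (hs : s = 1 ∨ s = -1)
    (vs : Fin d → ℝ) (hvs : nrm vs < 1) :
    0 < dot3 (β • Uvec e ρ v θ + s • Fvec e i ρ v θ) (ntil vs) := by
  -- basic notations
  set n : ℝ := nsq v with hn
  set m : ℝ := nsq vs with hm
  have hn0 : 0 ≤ n := Finset.sum_nonneg fun j _ => sq_nonneg _
  have hm0 : 0 ≤ m := Finset.sum_nonneg fun j _ => sq_nonneg _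
  have hn1 : n < 1 := aux_sqlt n hn0 (by rw [hn]; exact hv)
  have hm1 : m < 1 := aux_sqlt m hm0 (by rw [hm]; exact hvs)
  set γ : ℝ := gam v with hγ
  have hγpos : 0 < γ := by
    rw [hγ, gam]
    have : 0 < Real.sqrt (1 - nsq v) := Real.sqrt_pos.2 (by rw [← hn]; linarith)
    positivity
  have hγsq : γ ^ 2 * (1 - n) = 1 := by
    rw [hγ, gam, div_pow, one_pow, Real.sq_sqrt (by linarith : (0:ℝ) ≤ 1 - n)]
    rw [one_div_mul_cancel (ne_of_gt (by linarith : (0:ℝ) < 1 - n))]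
  set g : ℝ := Real.sqrt (1 - m) with hg
  have hg0 : 0 ≤ g := Real.sqrt_nonneg _
  have hgsq : g ^ 2 = 1 - m := Real.sq_sqrt (by linarith)
  set h : ℝ := hfun e θ with hh
  have hepos : 0 < e θ := hpos θ hθ
  have hgrow := synge_growth e hdiff hpos hineq θ hθ
  have hkey : 0 < h ^ 2 - 2 * h * θ - 1 := by
    rw [hh, hfun]; exact aux_hkey θ (e θ) hgrow
  have h2θ : 2 * θ < h := by
    rw [hh, hfun]; exact aux_h2θ θ (e θ) hgrow hθ hepos
  have hs2 : s ^ 2 = 1 := by rcases hs with h' | h' <;> rw [h'] <;> norm_num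
  set t : ℝ := s * v i with ht
  have hvi2 : v i ^ 2 ≤ n := by
    rw [hn, nsq]
    exact Finset.single_le_sum (f := fun j => v j ^ 2) (fun j _ => sq_nonneg _)
      (Finset.mem_univ i)
  have ht2 : t ^ 2 ≤ n := by rw [ht, mul_pow, hs2, one_mul]; exact hvi2
  set K : ℝ := β + t with hK
  have hKpos : 0 < K := aux_Kpos β t n ht2 hn1 hβ
  -- the components
  set c₁ : ℝ := ρ * γ * K with hc₁
  set c₃ : ℝ := ρ * h * γ ^ 2 * K - β * ρ * θ with hc₃
  set A : ℝ := ρ * h * γ ^ 2 * K with hA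
  set B : ℝ := s * ρ * θ with hB
  set c₂ : Fin d → ℝ := fun j => A * v j + B * (if j = i then 1 else 0) with hc₂
  set P : ℝ := ∑ j, c₂ j * vs j with hP
  -- formula for the dot product
  have hform : dot3 (β • Uvec e ρ v θ + s • Fvec e i ρ v θ) (ntil vs)
      = c₃ - (c₁ * g + P) := by
    simp only [dot3, ntil, Uvec, Fvec, Prod.fst_add, Prod.snd_add, Prod.smul_fst,
      Prod.smul_snd, Pi.add_apply, Pi.smul_apply, smul_eq_mul, dotp]
    have hsum : ∑ j, (β * (ρ * hfun e θ * gam v ^ 2 * v j)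
          + s * (ρ * hfun e θ * gam v ^ 2 * v i * v j + ρ * θ * (if j = i then 1 else 0)))
          * (-vs j) = -P := by
      rw [hP, ← Finset.sum_neg_distrib]
      refine Finset.sum_congr rfl fun j _ => ?_
      rw [hc₂]
      simp only [hA, hK, ht, hB, ← hγ, ← hh]
      ring
    rw [hsum, ← hγ, ← hh, ← hg]
    rw [hc₃, hc₁, hK, ht]
    ring
  rw [hform]
  -- sum of squares of middle component
  have hQ : ∑ j, c₂ j ^ 2 = A ^ 2 * n + (2 * A * B * v i + B ^ 2) := by
    have hterm : ∀ j, c₂ j ^ 2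
        = A ^ 2 * v j ^ 2 + (if j = i then 2 * A * B * v j + B ^ 2 else 0) := by
      intro j
      rw [hc₂]
      by_cases hji : j = i <;> simp [hji] <;> ring
    rw [Finset.sum_congr rfl fun j _ => hterm j, Finset.sum_add_distrib,
      Finset.sum_ite_eq' Finset.univ i (fun j => 2 * A * B * v j + B ^ 2)]
    simp [hn, nsq, Finset.mul_sum]
  set Q : ℝ := ∑ j, c₂ j ^ 2 with hQdef
  have hQ0 : 0 ≤ Q := Finset.sum_nonneg fun j _ => sq_nonneg _
  -- Cauchy–Schwarz : P^2 ≤ Q * m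
  have hPCS : P ^ 2 ≤ Q * m := by
    rw [hP, hQdef, hm, nsq]
    exact Finset.sum_mul_sq_le_sq_mul_sq Finset.univ c₂ vs
  -- main quadratic estimate : c₁² + Q < c₃²
  have hmain : c₁ ^ 2 + Q < c₃ ^ 2 := by
    have hid : c₃ ^ 2 - c₁ ^ 2 - Q
        = ρ ^ 2 * (γ ^ 2 * K ^ 2 * (h ^ 2 - 2 * h * θ - 1) + (β ^ 2 - 1) * θ ^ 2) := by
      rw [hQ, hc₁, hc₃, hA, hB, hK, ht]
      linear_combination (ρ^2 * h^2 * γ^2 * (β + s * v i)^2) * hγsq - (ρ^2 * θ^2) * hs2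
    have t1 : 0 < γ ^ 2 * K ^ 2 * (h ^ 2 - 2 * h * θ - 1) :=
      mul_pos (mul_pos (pow_pos hγpos 2) (pow_pos hKpos 2)) hkey
    have t2 : 0 ≤ (β ^ 2 - 1) * θ ^ 2 :=
      mul_nonneg (aux_bsq β hβ) (sq_nonneg θ)
    have t3 : 0 < ρ ^ 2 * (γ ^ 2 * K ^ 2 * (h ^ 2 - 2 * h * θ - 1) + (β ^ 2 - 1) * θ ^ 2) :=
      mul_pos (pow_pos hρ 2) (by linarith)
    linarith
  -- c₃ > 0
  have hc₃pos : 0 < c₃ := by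
    rw [hc₃]
    have e1 : 0 < γ ^ 2 * K := mul_pos (pow_pos hγpos 2) hKpos
    have e2 : (0:ℝ) ≤ 2 * K - β * (1 - n) := by
      have := aux_e2 β t n ht2 hn0 hβ; rw [hK]; linarith
    have e4 : β ≤ 2 * (γ ^ 2 * K) := aux_e4 β γ n K hγsq hγpos e2
    have e3 : 2 * θ * (γ ^ 2 * K) < h * (γ ^ 2 * K) := mul_lt_mul_of_pos_right h2θ e1
    have e5 : β * θ < h * (γ ^ 2 * K) := aux_e5 β θ h γ K hθ e4 e3
    have := aux_c3final ρ (h * (γ ^ 2 * K)) (β * θ) hρ e5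
    linarith [this]
  -- Cauchy–Schwarz in the full space : (c₁ g + P)² ≤ c₁² + Q
  have hCS : (c₁ * g + P) ^ 2 ≤ c₁ ^ 2 + Q :=
    aux_CS c₁ g P Q m hQ0 hgsq hm0 hPCS
  -- conclude
  have hX : c₁ * g + P < c₃ := aux_final (c₁ * g + P) (c₁ ^ 2 + Q) c₃ hCS hmain hc₃pos
  linarith
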